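/- arXiv:2410.16334 — 4 statements merged into one kernel-verified Lean document; each statement's English description precedes it below -/
import Mathlib

section
/- The exponential generating function identity holds: ∑_{n=0}^∞ t(n)·z^n/n! = exp(z + z²/2), where t(n) is the number of involutions of an n-element set; equivalently, as formal power series, the coefficientwise identity holds. -/
/-- The number of involutions of `Fin n`. -/
noncomputable def involCount (n : ℕ) : ℕ := Nat.card {σ : Equiv.Perm (Fin n) // σ * σ = 1}



open Equiv Equiv.Perm

variable {α : Type*} [DecidableEq α]

omit [DecidableEq α] in
private lemma pt {σ : Perm α} (h : σ * σ = 1) (y : α) : σ (σ y) = y := by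
  have := Equiv.ext_iff.1 h y
  simpa [Perm.mul_apply] using this

omit [DecidableEq α] in
private lemma fixpt {σ : Perm α} {x y : α} (h2 : σ x = x) : y ≠ x ↔ σ y ≠ x := by
  constructor
  · intro hy hxy
    exact hy (σ.injective (by rw [hxy, h2]))
  · intro hy hyx
    exact hy (by rw [hyx, h2])

/-- fixed-point case -/
def involFixEquiv (x : α) :
    {σ : Perm α // σ * σ = 1 ∧ σ x = x} ≃ {σ : Perm {y : α // y ≠ x} // σ * σ = 1} where
  toFun s :=
    ⟨s.1.subtypePerm (fun y => (fixpt s.2.2).symm), by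
      ext y
      exact pt s.2.1 (y : α)⟩
  invFun t :=
    ⟨ofSubtype t.1, by rw [← map_mul, t.2, map_one],
      ofSubtype_apply_of_not_mem t.1 (by simp)⟩
  left_inv := fun s => by
    obtain ⟨σ, h1, h2⟩ := s
    apply Subtype.ext
    apply ofSubtype_subtypePerm
    · exact fun z => (fixpt h2).symm
    · exact fun z hz hzx => hz (by subst hzx; exact h2)
  right_inv t := Subtype.ext (subtypePerm_ofSubtype t.1)

private lemma comm_swap {σ : Perm α} {x a : α} (h2 : σ x = a) (h3 : σ a = x) :
    Equiv.swap x a * σ = σ * Equiv.swap x a := by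
  have h := Equiv.swap_apply_apply σ x a
  rw [h2, h3, Equiv.swap_comm] at h
  calc Equiv.swap x a * σ = (σ * Equiv.swap x a * σ⁻¹) * σ := by rw [← h]
    _ = σ * Equiv.swap x a := by group

omit [DecidableEq α] in
private lemma sig_a {σ : Perm α} {x a : α} (h1 : σ * σ = 1) (h2 : σ x = a) : σ a = x := by
  rw [← h2]; exact pt h1 x

section Pair
variable (x a : α) (hxa : x ≠ a)

private lemma tau_fix_x {σ : Perm α} (h1 : σ * σ = 1) (h2 : σ x = a) :
    (Equiv.swap x a * σ) x = x := by
  simp [Perm.mul_apply, h2]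

private lemma tau_fix_a {σ : Perm α} (h1 : σ * σ = 1) (h2 : σ x = a) :
    (Equiv.swap x a * σ) a = a := by
  simp [Perm.mul_apply, sig_a h1 h2]

private lemma tau_invol {σ : Perm α} (h1 : σ * σ = 1) (h2 : σ x = a) :
    (Equiv.swap x a * σ) * (Equiv.swap x a * σ) = 1 := by
  have hc := comm_swap h2 (sig_a h1 h2)
  calc (Equiv.swap x a * σ) * (Equiv.swap x a * σ)
      = Equiv.swap x a * (σ * Equiv.swap x a) * σ := by group
    _ = Equiv.swap x a * (Equiv.swap x a * σ) * σ := by rw [← hc]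
    _ = (Equiv.swap x a * Equiv.swap x a) * (σ * σ) := by group
    _ = 1 := by rw [Equiv.swap_mul_self, h1, one_mul]

/-- forward map for the pair case -/
def pairF (s : {σ : Perm α // σ * σ = 1 ∧ σ x = a}) :
    {σ : Perm {y : α // y ≠ x ∧ y ≠ a} // σ * σ = 1} :=
  ⟨(Equiv.swap x a * s.1).subtypePerm
      (fun y => (and_congr (fixpt (tau_fix_x x a s.2.1 s.2.2))
        (fixpt (tau_fix_a x a s.2.1 s.2.2))).symm), by
    ext y
    have hp := pt (tau_invol x a s.2.1 s.2.2) (y : α)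
    simp only [Perm.mul_apply] at hp
    exact hp⟩

/-- backward map for the pair case -/
def pairG (t : {σ : Perm {y : α // y ≠ x ∧ y ≠ a} // σ * σ = 1}) :
    {σ : Perm α // σ * σ = 1 ∧ σ x = a} := by
  refine ⟨Equiv.swap x a * ofSubtype t.1, ?_, ?_⟩
  · have hx : ofSubtype t.1 x = x := ofSubtype_apply_of_not_mem t.1 (by simp)
    have ha : ofSubtype t.1 a = a := ofSubtype_apply_of_not_mem t.1 (by simp)
    have hc : Equiv.swap x a * ofSubtype t.1 = ofSubtype t.1 * Equiv.swap x a := by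
      ext y
      by_cases hy1 : y = x
      · simp [hy1, Perm.mul_apply, hx, Equiv.swap_apply_left,
          ofSubtype_apply_of_not_mem t.1 (show ¬(a ≠ x ∧ a ≠ a) by simp)]
      · by_cases hy2 : y = a
        · simp [hy2, Perm.mul_apply, ha, Equiv.swap_apply_right,
            ofSubtype_apply_of_not_mem t.1 (show ¬(x ≠ x ∧ x ≠ a) by simp)]
        · have hmem : ofSubtype t.1 y = y → True := fun _ => trivial
          have hy : ofSubtype t.1 y ≠ x := (fixpt hx).mp hy1
          have hy' : ofSubtype t.1 y ≠ a := (fixpt ha).mp hy2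
          simp [Perm.mul_apply, Equiv.swap_apply_of_ne_of_ne hy1 hy2,
            Equiv.swap_apply_of_ne_of_ne hy hy']
    calc (Equiv.swap x a * ofSubtype t.1) * (Equiv.swap x a * ofSubtype t.1)
        = Equiv.swap x a * (ofSubtype t.1 * Equiv.swap x a) * ofSubtype t.1 := by group
      _ = Equiv.swap x a * (Equiv.swap x a * ofSubtype t.1) * ofSubtype t.1 := by rw [← hc]
      _ = (Equiv.swap x a * Equiv.swap x a) * (ofSubtype t.1 * ofSubtype t.1) := by group
      _ = 1 := by rw [Equiv.swap_mul_self, ← map_mul, t.2, map_one, one_mul]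
  · have hx : ofSubtype t.1 x = x := ofSubtype_apply_of_not_mem t.1 (by simp)
    simp [Perm.mul_apply, hx, Equiv.swap_apply_left]

private lemma pairGF (s : {σ : Perm α // σ * σ = 1 ∧ σ x = a}) :
    pairG x a (pairF x a s) = s := by
  apply Subtype.ext
  show Equiv.swap x a * ofSubtype ((pairF x a s).1) = s.1
  have hof : ofSubtype ((pairF x a s).1) = Equiv.swap x a * s.1 := by
    apply ofSubtype_subtypePerm
    · exact fun yy => (and_congr (fixpt (tau_fix_x x a s.2.1 s.2.2))
        (fixpt (tau_fix_a x a s.2.1 s.2.2))).symm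
    · exact fun z hz =>
      ⟨fun h => hz (by rw [h]; exact tau_fix_x x a s.2.1 s.2.2),
       fun h => hz (by rw [h]; exact tau_fix_a x a s.2.1 s.2.2)⟩
  rw [hof, ← mul_assoc, Equiv.swap_mul_self, one_mul]

private lemma pairFG (t : {σ : Perm {y : α // y ≠ x ∧ y ≠ a} // σ * σ = 1}) :
    pairF x a (pairG x a t) = t := by
  refine Subtype.ext (Equiv.ext fun y => Subtype.ext ?_)
  show ((Equiv.swap x a * (Equiv.swap x a * ofSubtype t.1)) ((y : α)) : α) = ((t.1 y : α))
  simp [Perm.mul_apply, Equiv.swap_apply_self, ofSubtype_apply_coe]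

/-- pair case equivalence -/
def involPairEquiv : {σ : Perm α // σ * σ = 1 ∧ σ x = a} ≃
    {σ : Perm {y : α // y ≠ x ∧ y ≠ a} // σ * σ = 1} :=
  ⟨pairF x a, pairG x a, pairGF x a, pairFG x a⟩

end Pair

lemma involCard_congr {α β : Type*} (e : α ≃ β) :
    Nat.card {σ : Perm α // σ * σ = 1} = Nat.card {σ : Perm β // σ * σ = 1} := by
  refine Nat.card_congr ((e.permCongr).subtypeEquiv fun σ => ?_)
  constructor
  · intro h
    ext y
    have := pt h (e.symm y)
    simp only [Perm.mul_apply, Equiv.permCongr_apply, Perm.one_apply]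
    simp [this]
  · intro h
    ext y
    have := pt h (e y)
    simp only [Perm.mul_apply, Equiv.permCongr_apply, Equiv.symm_apply_apply] at this
    simpa using e.injective this

lemma involCard_eq {β : Type*} [Fintype β] [DecidableEq β] {n : ℕ}
    (h : Fintype.card β = n) :
    Nat.card {σ : Perm β // σ * σ = 1} = involCount n :=
  involCard_congr (Fintype.equivFinOfCardEq h)

lemma involCount_rec (n : ℕ) :
    involCount (n + 2) = involCount (n + 1) + (n + 1) * involCount n := by
  classical
  set x : Fin (n + 2) := Fin.last (n + 1) with hx
  have fiber : ∀ a : Fin (n + 2),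
      {s : {σ : Perm (Fin (n + 2)) // σ * σ = 1} // s.1 x = a} ≃
        {σ : Perm (Fin (n + 2)) // σ * σ = 1 ∧ σ x = a} :=
    fun a => Equiv.subtypeSubtypeEquivSubtypeInter
      (fun σ : Perm (Fin (n + 2)) => σ * σ = 1) (fun σ => σ x = a)
  have hsplit : involCount (n + 2) = ∑ a : Fin (n + 2),
      Nat.card {σ : Perm (Fin (n + 2)) // σ * σ = 1 ∧ σ x = a} := by
    rw [involCount,
      ← Nat.card_congr (Equiv.sigmaFiberEquiv
        (fun s : {σ : Perm (Fin (n + 2)) // σ * σ = 1} => s.1 x)),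
      Nat.card_eq_fintype_card, Fintype.card_sigma]
    refine Finset.sum_congr rfl fun a _ => ?_
    rw [← Nat.card_eq_fintype_card, Nat.card_congr (fiber a)]
  have hfix : Nat.card {σ : Perm (Fin (n + 2)) // σ * σ = 1 ∧ σ x = x}
      = involCount (n + 1) := by
    rw [Nat.card_congr (involFixEquiv x)]
    refine involCard_eq ?_
    have := Set.card_ne_eq x
    simpa using this
  have hpair : ∀ a : Fin (n + 2), a ≠ x →
      Nat.card {σ : Perm (Fin (n + 2)) // σ * σ = 1 ∧ σ x = a} = involCount n := by
    intro a ha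
    rw [Nat.card_congr (involPairEquiv x a)]
    refine involCard_eq ?_
    rw [Fintype.card_subtype]
    have hfil : (Finset.univ.filter fun y : Fin (n + 2) => y ≠ x ∧ y ≠ a)
        = Finset.univ \ {x, a} := by
      ext y; simp [not_or, and_comm]
    rw [hfil, Finset.card_sdiff_of_subset (by simp)]
    rw [Finset.card_insert_of_notMem (by simpa using (Ne.symm ha)), Finset.card_singleton]
    simp
  rw [hsplit, ← Finset.add_sum_erase _ _ (Finset.mem_univ x), hfix]
  congr 1
  rw [Finset.sum_congr rfl (fun a haa => hpair a (Finset.ne_of_mem_erase haa)),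
    Finset.sum_const, Finset.card_erase_of_mem (Finset.mem_univ x)]
  simp [mul_comm]

private def cc (n : ℕ) : ℚ :=
  if n % 2 = 0 then 1 / (2 ^ (n / 2) * (Nat.factorial (n / 2) : ℚ)) else 0

private lemma cc_step (m : ℕ) : ((m : ℚ) + 2) * cc (m + 2) = cc m := by
  by_cases h : m % 2 = 0
  · obtain ⟨j, hj⟩ := Nat.even_iff.mpr h
    subst hj
    have h1 : (j + j) % 2 = 0 := by omega
    have h2 : (j + j + 2) % 2 = 0 := by omega
    have h3 : (j + j) / 2 = j := by omega
    have h4 : (j + j + 2) / 2 = j + 1 := by omega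
    rw [cc, cc, if_pos h1, if_pos h2, h3, h4]
    have hf : (Nat.factorial (j + 1) : ℚ) = (j + 1) * Nat.factorial j := by
      rw [Nat.factorial_succ]; push_cast; ring
    have hne1 : (Nat.factorial j : ℚ) ≠ 0 := by
      exact_mod_cast (Nat.factorial_pos j).ne'
    have hne2 : (2 : ℚ) ^ j ≠ 0 := pow_ne_zero _ (by norm_num)
    have hne3 : ((j : ℚ) + 1) ≠ 0 := by positivity
    rw [hf]
    push_cast
    field_simp
    ring
  · have h2 : ¬ (m + 2) % 2 = 0 := by omega
    rw [cc, cc, if_neg h, if_neg h2, mul_zero]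

private def B (n : ℕ) : ℚ :=
  ∑ k ∈ Finset.range (n + 1), (1 / Nat.factorial k : ℚ) * cc (n - k)

private lemma B_rec (n : ℕ) : ((n : ℚ) + 2) * B (n + 2) = B (n + 1) + B n := by
  rw [B, Finset.mul_sum]
  have split : ∀ k ∈ Finset.range (n + 3),
      ((n : ℚ) + 2) * ((1 / Nat.factorial k : ℚ) * cc (n + 2 - k)) =
        ((k : ℚ) / Nat.factorial k * cc (n + 2 - k)) +
          (1 / Nat.factorial k : ℚ) * (((n + 2 - k : ℕ) : ℚ) * cc (n + 2 - k)) := by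
    intro k hk
    have hk' : k ≤ n + 2 := by simpa [Nat.lt_succ_iff] using hk
    have hnk : (n + 2 - k) + k = n + 2 := by omega
    have hq : ((n + 2 - k : ℕ) : ℚ) + (k : ℚ) = (n : ℚ) + 2 := by exact_mod_cast hnk
    rw [show ((n : ℚ) + 2) = (k : ℚ) + ((n + 2 - k : ℕ) : ℚ) by linarith]
    ring
  rw [Finset.sum_congr rfl split, Finset.sum_add_distrib]
  congr 1
  · -- first sum = B (n+1)
    rw [Finset.sum_range_succ']
    simp only [Nat.cast_zero, zero_div, zero_mul, add_zero]
    rw [B]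
    refine Finset.sum_congr rfl fun k hk => ?_
    have h1 : n + 2 - (k + 1) = n + 1 - k := by omega
    have h2 : ((k : ℚ) + 1) / Nat.factorial (k + 1) = 1 / Nat.factorial k := by
      rw [Nat.factorial_succ]
      have hne : (Nat.factorial k : ℚ) ≠ 0 := by
        exact_mod_cast (Nat.factorial_pos k).ne'
      push_cast
      field_simp
    rw [h1]
    push_cast
    rw [h2]
  · -- second sum = B n
    rw [show n + 3 = (n + 2) + 1 from rfl, Finset.sum_range_succ, Finset.sum_range_succ]
    have e1 : n + 2 - (n + 1) = 1 := by omega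
    have e2 : n + 2 - (n + 2) = 0 := by omega
    rw [e1, e2]
    have c1 : cc 1 = 0 := by rw [cc]; norm_num
    simp only [c1, Nat.sub_self, Nat.cast_zero, Nat.cast_one, mul_zero, zero_mul, add_zero]
    rw [B]
    refine Finset.sum_congr rfl fun k hk => ?_
    have hk' : k ≤ n := by simpa [Nat.lt_succ_iff] using hk
    have h1 : n + 2 - k = (n - k) + 2 := by omega
    rw [h1]
    have := cc_step (n - k)
    push_cast at this ⊢
    rw [this]

private lemma involCount_zero : involCount 0 = 1 := by
  rw [involCount, Nat.card_eq_one_iff_unique]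
  refine ⟨⟨fun a b => Subtype.ext (Equiv.ext fun y => y.elim0)⟩, ⟨1, one_mul 1⟩⟩

private lemma involCount_one : involCount 1 = 1 := by
  rw [involCount, Nat.card_eq_one_iff_unique]
  refine ⟨⟨fun a b => Subtype.ext (Equiv.ext fun y => Subsingleton.elim _ _)⟩, ⟨1, one_mul 1⟩⟩

private lemma main_claim : ∀ n, (involCount n : ℚ) / Nat.factorial n = B n := by
  intro n
  induction n using Nat.strong_induction_on with
  | _ n ih =>
    match n with
    | 0 => simp [involCount_zero, B, cc]
    | 1 => simp [involCount_one, B, cc, Finset.sum_range_succ]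
    | (m + 2) =>
      have h1 := ih (m + 1) (by omega)
      have h0 := ih m (by omega)
      have hB := B_rec m
      rw [← h1, ← h0] at hB
      have hm2 : ((m : ℚ) + 2) ≠ 0 := by positivity
      have hBv : B (m + 2) =
          ((involCount (m + 1) : ℚ) / Nat.factorial (m + 1)
            + (involCount m : ℚ) / Nat.factorial m) / ((m : ℚ) + 2) := by
        field_simp at hB ⊢
        linarith
      rw [hBv, involCount_rec m]
      have hf2 : (Nat.factorial (m + 2) : ℚ)
          = ((m : ℚ) + 2) * ((m : ℚ) + 1) * Nat.factorial m := by
        rw [Nat.factorial_succ, Nat.factorial_succ]; push_cast; ring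
      have hf1 : (Nat.factorial (m + 1) : ℚ) = ((m : ℚ) + 1) * Nat.factorial m := by
        rw [Nat.factorial_succ]; push_cast; ring
      have hne : (Nat.factorial m : ℚ) ≠ 0 := by
        exact_mod_cast (Nat.factorial_pos m).ne'
      have hm1 : ((m : ℚ) + 1) ≠ 0 := by positivity
      rw [hf2, hf1]
      push_cast
      field_simp

/-- The exponential generating function identity
`∑ t(n) zⁿ/n! = exp(z + z²/2) = exp(z) · exp(z²/2)`, as formal power series over `ℚ`.
The second factor `exp(z²/2)` has coefficients `1/(2^m · m!)` at `z^{2m}` and `0` at odd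
powers. -/
theorem involution_egf :
    PowerSeries.mk (fun n => (involCount n : ℚ) / Nat.factorial n) =
      PowerSeries.exp ℚ *
        PowerSeries.mk (fun n =>
          if n % 2 = 0 then 1 / (2 ^ (n / 2) * (Nat.factorial (n / 2) : ℚ)) else 0) := by
  ext n
  rw [PowerSeries.coeff_mk, PowerSeries.coeff_mul,
    Finset.Nat.sum_antidiagonal_eq_sum_range_succ_mk]
  have : ∀ k ∈ Finset.range (n + 1),
      (PowerSeries.coeff k) (PowerSeries.exp ℚ) *
        (PowerSeries.coeff (n - k)) (PowerSeries.mk fun n =>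
          if n % 2 = 0 then 1 / (2 ^ (n / 2) * (Nat.factorial (n / 2) : ℚ)) else 0)
      = (1 / Nat.factorial k : ℚ) * cc (n - k) := by
    intro k _
    rw [PowerSeries.coeff_exp, PowerSeries.coeff_mk]
    simp [cc, Algebra.algebraMap_self]
  rw [Finset.sum_congr rfl this]
  exact main_claim n
end

section
/- The binomial-sum identity t(n) = ∑_{k=0}^{⌊n/2⌋} C(n, 2k) · (2k)!/(2^k · k!) holds for all n, where t satisfies t(0)=t(1)=1 and t(n+2)=t(n+1)+(n+1)·t(n). -/
open Nat Finset

/-- the term value: (2k)!/(2^k k!) = (2k-1)‼ -/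
lemma inv_term_eq (k : ℕ) : (2 * k)! / (2 ^ k * k !) = (2 * k - 1)‼ := by
  cases k with
  | zero => simp
  | succ m =>
    have h : (2 * (m + 1))! = 2 ^ (m + 1) * (m + 1)! * (2 * (m + 1) - 1)‼ := by
      have : 2 * (m + 1) = (2 * m + 1) + 1 := by ring
      rw [this, Nat.factorial_eq_mul_doubleFactorial]
      have h2 : (2 * m + 1 + 1) = 2 * (m + 1) := by ring
      rw [h2, Nat.doubleFactorial_two_mul]
      congr 1
    rw [h, Nat.mul_div_cancel_left]
    positivity

/-- termwise recurrence -/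
lemma inv_term_rec (n k : ℕ) :
    Nat.choose (n + 2) (2 * (k + 1)) * (2 * (k + 1) - 1)‼ =
      Nat.choose (n + 1) (2 * (k + 1)) * (2 * (k + 1) - 1)‼ +
        (n + 1) * (Nat.choose n (2 * k) * (2 * k - 1)‼) := by
  have hp : Nat.choose (n + 2) (2 * (k + 1)) =
      Nat.choose (n + 1) (2 * (k + 1)) + Nat.choose (n + 1) (2 * k + 1) := by
    have : 2 * (k + 1) = (2 * k + 1) + 1 := by ring
    rw [this, Nat.choose_succ_succ]
    exact Nat.add_comm _ _
  have hdf : (2 * (k + 1) - 1)‼ = (2 * k + 1) * (2 * k - 1)‼ := by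
    cases k with
    | zero => simp [Nat.doubleFactorial]
    | succ m =>
      have h1 : 2 * (m + 1 + 1) - 1 = (2 * (m + 1) - 1) + 2 := by omega
      rw [h1, Nat.doubleFactorial_add_two]
      congr 1
  have hc : Nat.choose (n + 1) (2 * k + 1) * (2 * k + 1) = (n + 1) * Nat.choose n (2 * k) := by
    have := Nat.add_one_mul_choose_eq n (2 * k)
    simp -failIfUnchanged only [Nat.succ_eq_add_one] at this
    omega
  rw [hp, add_mul, hdf]
  have : Nat.choose (n + 1) (2 * k + 1) * ((2 * k + 1) * (2 * k - 1)‼) =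
      (n + 1) * (Nat.choose n (2 * k) * (2 * k - 1)‼) := by
    rw [← mul_assoc, hc, mul_assoc]
  rw [this]

lemma inv_sum_ext (t : ℕ → ℕ)
    (h0 : t 0 = 1) (h1 : t 1 = 1)
    (hrec : ∀ n : ℕ, t (n + 2) = t (n + 1) + (n + 1) * t n) :
    ∀ n : ℕ, t n = ∑ k ∈ Finset.range (n + 1), Nat.choose n (2 * k) * (2 * k - 1)‼ := by
  have key : ∀ n : ℕ,
      (t n = ∑ k ∈ Finset.range (n + 1), Nat.choose n (2 * k) * (2 * k - 1)‼) ∧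
      (t (n+1) = ∑ k ∈ Finset.range (n + 2), Nat.choose (n+1) (2 * k) * (2 * k - 1)‼) := by
    intro n
    induction n with
    | zero => constructor <;> simp [h0, h1, Finset.sum_range_succ]
    | succ m ih =>
      refine ⟨ih.2, ?_⟩
      rw [hrec m, ih.1, ih.2]
      rw [Finset.sum_range_succ' (fun k => Nat.choose (m + 2) (2 * k) * (2 * k - 1)‼) (m + 2)]
      simp only [inv_term_rec]
      rw [Finset.sum_add_distrib, ← Finset.mul_sum]
      have e1 : (∑ k ∈ Finset.range (m + 2),
            Nat.choose (m + 1) (2 * (k + 1)) * (2 * (k + 1) - 1)‼) +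
            Nat.choose (m + 2) (2 * 0) * (2 * 0 - 1)‼ =
          ∑ k ∈ Finset.range (m + 2), Nat.choose (m + 1) (2 * k) * (2 * k - 1)‼ := by
        rw [Finset.sum_range_succ (fun k => Nat.choose (m+1) (2*(k+1)) * (2*(k+1)-1)‼) (m+1)]
        have hz : Nat.choose (m + 1) (2 * (m + 1 + 1)) = 0 :=
          Nat.choose_eq_zero_of_lt (by omega)
        rw [hz]
        rw [Finset.sum_range_succ' (fun k => Nat.choose (m + 1) (2 * k) * (2 * k - 1)‼) (m + 1)]
        simp
      have e2 : (∑ k ∈ Finset.range (m + 2), Nat.choose m (2 * k) * (2 * k - 1)‼) =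
          ∑ k ∈ Finset.range (m + 1), Nat.choose m (2 * k) * (2 * k - 1)‼ := by
        rw [Finset.sum_range_succ]
        have hz : Nat.choose m (2 * (m + 1)) = 0 := Nat.choose_eq_zero_of_lt (by omega)
        rw [hz]; simp
      rw [e2]
      omega
  intro n; exact (key n).1

theorem involution_binomial_sum (t : ℕ → ℕ)
    (h0 : t 0 = 1) (h1 : t 1 = 1)
    (hrec : ∀ n : ℕ, t (n + 2) = t (n + 1) + (n + 1) * t n) :
    ∀ n : ℕ, t n =
      ∑ k ∈ Finset.range (n / 2 + 1),
        Nat.choose n (2 * k) * (Nat.factorial (2 * k) / (2 ^ k * Nat.factorial k)) := by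
  intro n
  have := inv_sum_ext t h0 h1 hrec n
  simp only [inv_term_eq]
  rw [this]
  symm
  apply Finset.sum_subset
  · intro x hx
    simp only [Finset.mem_range] at *
    omega
  · intro x hx hnx
    simp only [Finset.mem_range] at *
    have : Nat.choose n (2 * x) = 0 := Nat.choose_eq_zero_of_lt (by omega)
    rw [this, zero_mul]
end

section
/- For the sequence t of involution counts, the ratio t(n+1)/t(n) satisfies √n ≤ t(n+1)/t(n) ≤ √(n+1) + 1 for all n ≥ 1 (as an inequality of reals: t(n)·√n ≤ t(n+1) and t(n+1) ≤ t(n)·(√(n+1)+1)). -/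
theorem involCount_ratio_bounds (t : ℕ → ℕ)
    (h0 : t 0 = 1) (h1 : t 1 = 1)
    (hrec : ∀ n : ℕ, t (n + 2) = t (n + 1) + (n + 1) * t n) :
    ∀ n : ℕ, 1 ≤ n →
      (t n : ℝ) * Real.sqrt n ≤ (t (n + 1) : ℝ) ∧
      (t (n + 1) : ℝ) ≤ (t n : ℝ) * (Real.sqrt (n + 1) + 1) := by
  have hpos : ∀ n, 0 < t n := by
    intro n
    induction n using Nat.strong_induction_on with
    | _ n ih =>
      match n with
      | 0 => simp [h0]
      | 1 => simp [h1]
      | (m+2) =>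
        have h := ih (m+1) (by omega)
        rw [hrec m]
        exact Nat.add_pos_left h _
  have key : ∀ n : ℕ, 1 ≤ n →
      ((n : ℝ) + 1) * t n ≤ Real.sqrt ((n : ℝ) + 2) * t (n + 1) ∧
      (t (n + 1) : ℝ) ≤ (Real.sqrt ((n : ℝ) + 1) + 1) * t n := by
    intro n hn
    induction n, hn using Nat.le_induction with
    | base =>
      have ht2 : t 2 = 2 := by
        have h := hrec 0
        simp [h0, h1] at h
        exact h
      rw [h1, ht2]
      have h3 : (1 : ℝ) ≤ Real.sqrt 3 := by
        rw [show (3:ℝ) = 3 from rfl]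
        nlinarith [Real.sq_sqrt (by norm_num : (3:ℝ) ≥ 0), Real.sqrt_nonneg (3:ℝ)]
      have h2 : (1 : ℝ) ≤ Real.sqrt 2 := by
        nlinarith [Real.sq_sqrt (by norm_num : (2:ℝ) ≥ 0), Real.sqrt_nonneg (2:ℝ)]
      constructor
      · push_cast
        norm_num
      · push_cast
        norm_num
        nlinarith [h2]
    | succ n hn ih =>
      obtain ⟨hA, hB⟩ := ih
      set a := Real.sqrt ((n : ℝ) + 1) with ha_def
      set b := Real.sqrt ((n : ℝ) + 3) with hb_def
      have ha0 : 0 ≤ a := Real.sqrt_nonneg _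
      have hb0 : 0 ≤ b := Real.sqrt_nonneg _
      have ha2 : a ^ 2 = (n : ℝ) + 1 := Real.sq_sqrt (by positivity)
      have hb2 : b ^ 2 = (n : ℝ) + 3 := Real.sq_sqrt (by positivity)
      have htn : (0 : ℝ) < t n := by exact_mod_cast hpos n
      have htn1 : (0 : ℝ) < t (n + 1) := by exact_mod_cast hpos (n + 1)
      have hrecR : (t (n + 2) : ℝ) = t (n + 1) + ((n : ℝ) + 1) * t n := by
        rw [hrec n]; push_cast; ring
      -- key scalar inequality: (a^2+1)*(a+1) ≤ b*(a^2+a+1)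
      have hscal : (a ^ 2 + 1) * (a + 1) ≤ b * (a ^ 2 + a + 1) := by
        nlinarith [sq_nonneg (b - a), sq_nonneg (b - 1), sq_nonneg (a - 1),
          mul_nonneg ha0 hb0, sq_nonneg (a*b - a^2 - 1), sq_nonneg (a + b),
          mul_nonneg (mul_nonneg ha0 ha0) hb0, mul_nonneg (mul_nonneg ha0 ha0) ha0]
      constructor
      · -- A(n+1): (n+2) * t(n+1) ≤ b * t(n+2)
        push_cast
        have hsqrt_eq : Real.sqrt ((n : ℝ) + 1 + 2) = b := by
          rw [hb_def, show (n : ℝ) + 1 + 2 = (n : ℝ) + 3 by ring]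
        rw [hsqrt_eq, hrecR]
        have hmul : ((n : ℝ) + 1 + 1) * t (n + 1) * (a + 1) ≤
            b * (t (n + 1) + ((n : ℝ) + 1) * t n) * (a + 1) := by
          calc ((n : ℝ) + 1 + 1) * t (n + 1) * (a + 1)
              = (a ^ 2 + 1) * (a + 1) * t (n + 1) := by rw [← ha2]; ring
            _ ≤ b * (a ^ 2 + a + 1) * t (n + 1) :=
                mul_le_mul_of_nonneg_right hscal htn1.le
            _ = b * (a + 1) * t (n + 1) + b * a ^ 2 * t (n + 1) := by ring
            _ ≤ b * (a + 1) * t (n + 1) + b * a ^ 2 * ((a + 1) * t n) := by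
                have : b * a ^ 2 * t (n + 1) ≤ b * a ^ 2 * ((a + 1) * t n) :=
                  mul_le_mul_of_nonneg_left hB (by positivity)
                linarith
            _ = b * (t (n + 1) + a ^ 2 * t n) * (a + 1) := by ring
            _ = b * (t (n + 1) + ((n : ℝ) + 1) * t n) * (a + 1) := by rw [ha2]
        have hap : (0 : ℝ) < a + 1 := by linarith
        exact le_of_mul_le_mul_right hmul hap
      · -- B(n+1): t(n+2) ≤ (√(n+2)+1) * t(n+1)
        push_cast
        have hsq : Real.sqrt ((n : ℝ) + 1 + 1) = Real.sqrt ((n : ℝ) + 2) := by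
          rw [show (n : ℝ) + 1 + 1 = (n : ℝ) + 2 by ring]
        rw [hsq, hrecR]
        -- from hA: (n+1)*t n ≤ √(n+2) * t(n+1)
        linarith [hA]
  intro n hn
  obtain ⟨hA, hB⟩ := key n hn
  have hs2 : (0 : ℝ) < Real.sqrt ((n : ℝ) + 2) := Real.sqrt_pos.mpr (by positivity)
  have htn : (0 : ℝ) ≤ t n := by positivity
  constructor
  · -- t n * √n ≤ t(n+1), using √n * √(n+2) ≤ n+1
    have hprod : Real.sqrt (n : ℝ) * Real.sqrt ((n : ℝ) + 2) ≤ (n : ℝ) + 1 := by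
      rw [← Real.sqrt_mul (by positivity)]
      calc Real.sqrt ((n : ℝ) * ((n : ℝ) + 2)) ≤ Real.sqrt (((n : ℝ) + 1) ^ 2) :=
            Real.sqrt_le_sqrt (by nlinarith)
        _ = (n : ℝ) + 1 := Real.sqrt_sq (by positivity)
    have : (t n : ℝ) * Real.sqrt (n : ℝ) * Real.sqrt ((n : ℝ) + 2) ≤
        Real.sqrt ((n : ℝ) + 2) * t (n + 1) := by
      calc (t n : ℝ) * Real.sqrt (n : ℝ) * Real.sqrt ((n : ℝ) + 2)
          = (Real.sqrt (n : ℝ) * Real.sqrt ((n : ℝ) + 2)) * t n := by ring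
        _ ≤ ((n : ℝ) + 1) * t n := by
            apply mul_le_mul_of_nonneg_right hprod htn
        _ ≤ Real.sqrt ((n : ℝ) + 2) * t (n + 1) := hA
    have h' : (t n : ℝ) * Real.sqrt (n : ℝ) * Real.sqrt ((n : ℝ) + 2) ≤
        (t (n + 1) : ℝ) * Real.sqrt ((n : ℝ) + 2) := by linarith [this]
    exact le_of_mul_le_mul_right h' hs2
  · linarith [hB]
end

section
/- The involution counts satisfy the log-convexity inequality t(n)² ≤ t(n-1)·t(n+1) for all n ≥ 1. -/
theorem involCount_log_convex (t : ℕ → ℕ)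
    (h0 : t 0 = 1) (h1 : t 1 = 1)
    (hrec : ∀ n : ℕ, t (n + 2) = t (n + 1) + (n + 1) * t n) :
    ∀ n : ℕ, 1 ≤ n → t n ^ 2 ≤ t (n - 1) * t (n + 1) := by
  have key : ∀ n : ℕ, t (n + 1) ^ 2 ≤ t n * t (n + 2) ∧
      (n + 1) * (t n * t (n + 2)) ≤ (n + 2) * t (n + 1) ^ 2 := by
    intro n
    induction n with
    | zero => simp [hrec 0, h0, h1]
    | succ m ih =>
      obtain ⟨i1, i2⟩ := ih
      have e1 := hrec m
      have e2 : t (m + 3) = t (m + 2) + (m + 2) * t (m + 1) := hrec (m + 1)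
      refine ⟨?_, ?_⟩
      · show t (m + 2) ^ 2 ≤ t (m + 1) * t (m + 3)
        nlinarith [sq_nonneg (t m), sq_nonneg (t (m+1))]
      have h3 : (m + 3) * t (m+1) ^ 2 ≤ (m + 3) * (t m * t (m + 2)) :=
        Nat.mul_le_mul_left _ i1
      have h4 : (m + 1) * ((m + 3) * t (m+1) ^ 2) ≤ (m + 1) * ((m + 3) * (t m * t (m + 2))) :=
        Nat.mul_le_mul_left _ h3
      show (m + 2) * (t (m + 1) * t (m + 3)) ≤ (m + 3) * t (m + 2) ^ 2
      rw [e2]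
      rw [e1] at i1 i2 h3 h4 ⊢
      nlinarith [Nat.zero_le (t m * t (m+1)), Nat.zero_le (m * (t m * t (m+1)))]
  intro n hn
  obtain ⟨m, rfl⟩ := Nat.exists_eq_add_of_le hn
  simpa [add_comm 1 m] using (key m).1
end
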